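/- arXiv:math/0608795 — 2 statements merged into one kernel-verified Lean document; each statement's English description precedes it below -/
import Mathlib

section
/- Let f : ℝⁿ → ℝ be smooth with f ≡ 0 outside a ball B_{1+ε}(0) and f(x) = -exp(-2d/dist(x, ∂B_{1+ε})) on an ε-neighborhood U_ε(∂B) of the unit sphere inside the unit ball. Then for all sufficiently large d > 0, the conformal metric e^{2f}·g_Eucl has positive scalar curvature on U_ε(∂B) and equals g_Eucl outside B_{1+ε}(0). -/
noncomputable section

open MeasureTheory Filter

/-- Euclidean n-space. -/
abbrev Euc (n : ℕ) := EuclideanSpace ℝ (Fin n)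

/-- Partial derivative in the i-th coordinate direction. -/
def pd {n : ℕ} (f : Euc n → ℝ) (i : Fin n) (x : Euc n) : ℝ :=
  fderiv ℝ f x (EuclideanSpace.single i 1)

/-- Euclidean Laplacian. -/
def eucLap {n : ℕ} (f : Euc n → ℝ) (x : Euc n) : ℝ :=
  ∑ i, pd (pd f i) i x

/-- Squared norm of the Euclidean gradient. -/
def eucGradSq {n : ℕ} (f : Euc n → ℝ) (x : Euc n) : ℝ :=
  ∑ i, (pd f i x) ^ 2

/-- The conformal factor exponent of Lemma 2.2: `f ≡ 0` outside `B_{1+ε}(0)` and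
`f(x) = -exp(-2d/dist(x,∂B_{1+ε}))` inside. -/
def fconf (n : ℕ) (ε d : ℝ) (x : Euc n) : ℝ :=
  if ‖x‖ < 1 + ε then -Real.exp (-(2 * d) / (1 + ε - ‖x‖)) else 0

/-! ### Auxiliary 1D functions -/

def phi (ε d r : ℝ) : ℝ := -Real.exp (-(2*d)/(1+ε-r))
def phi1 (ε d r : ℝ) : ℝ := (2*d/(1+ε-r)^2) * Real.exp (-(2*d)/(1+ε-r))
def phi2 (ε d r : ℝ) : ℝ :=
  (4*d*((1+ε-r) - d)/(1+ε-r)^4) * Real.exp (-(2*d)/(1+ε-r))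

lemma hasDerivAt_u (ε d r : ℝ) (h : r < 1+ε) :
    HasDerivAt (fun t => -(2*d)/(1+ε-t)) (-(2*d)/(1+ε-r)^2) r := by
  have hs : (1+ε-r) ≠ 0 := by nlinarith
  have h1 : HasDerivAt (fun t : ℝ => 1+ε-t) (-1) r := by
    simpa using (hasDerivAt_id' r).const_sub (1+ε)
  have := (hasDerivAt_const r (-(2*d))).div h1 hs
  refine this.congr_deriv ?_
  symm
  field_simp
  ring

lemma hasDerivAt_phi (ε d r : ℝ) (h : r < 1+ε) :
    HasDerivAt (phi ε d) (phi1 ε d r) r := by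
  have hs : (0:ℝ) < 1+ε-r := by linarith
  have h1 := ((hasDerivAt_u ε d r h).exp).neg
  refine h1.congr_deriv ?_
  symm
  unfold phi1
  field_simp

lemma hasDerivAt_phi1 (ε d r : ℝ) (h : r < 1+ε) :
    HasDerivAt (phi1 ε d) (phi2 ε d r) r := by
  have hs : (0:ℝ) < 1+ε-r := by linarith
  have hs' : ((1+ε-r)^2 : ℝ) ≠ 0 := by positivity
  have h1 : HasDerivAt (fun t : ℝ => 1+ε-t) (-1) r := by
    simpa using (hasDerivAt_id' r).const_sub (1+ε)
  have h2 : HasDerivAt (fun t : ℝ => (1+ε-t)^2) (2*(1+ε-r)*(-1)) r := by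
    simpa using h1.fun_pow 2
  have h3 := (hasDerivAt_const r (2*d)).div h2 hs'
  have h4 := (hasDerivAt_u ε d r h).exp
  have h5 := h3.mul h4
  refine h5.congr_deriv ?_
  symm
  simp only [Pi.div_apply]
  unfold phi2
  field_simp
  ring

/-! ### Derivative of the norm -/

lemma hasFDerivAt_norm' {n : ℕ} {x : Euc n} (hx : x ≠ 0) :
    HasFDerivAt (fun y : Euc n => ‖y‖) (‖x‖⁻¹ • innerSL ℝ x) x := by
  have hpos : (0:ℝ) < ‖x‖ := norm_pos_iff.2 hx
  have h1 : HasFDerivAt (fun y : Euc n => ‖y‖ ^ 2) (2 • (innerSL ℝ x)) x :=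
    hasStrictFDerivAt_norm_sq x |>.hasFDerivAt
  have h2 : HasDerivAt Real.sqrt (1 / (2 * Real.sqrt (‖x‖^2))) (‖x‖^2) :=
    Real.hasDerivAt_sqrt (by positivity)
  have h3 := h2.comp_hasFDerivAt x h1
  have he : (fun y : Euc n => Real.sqrt (‖y‖^2)) = fun y : Euc n => ‖y‖ := by
    funext y; rw [Real.sqrt_sq (norm_nonneg y)]
  rw [Function.comp_def, he] at h3
  refine h3.congr_fderiv ?_
  symm
  rw [Real.sqrt_sq (norm_nonneg x)]
  ext v
  simp [smul_smul]
  field_simp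

section Derivs

variable {n : ℕ} {ε d : ℝ}

lemma hA {x : Euc n} (hx : x ≠ 0) (h : ‖x‖ < 1+ε) :
    HasFDerivAt (fun y : Euc n => phi1 ε d ‖y‖)
      ((phi2 ε d ‖x‖ * ‖x‖⁻¹) • innerSL ℝ x) x := by
  have := (hasDerivAt_phi1 ε d ‖x‖ h).comp_hasFDerivAt x (hasFDerivAt_norm' hx)
  simpa [Function.comp_def, smul_smul] using this

lemma hF {x : Euc n} (hx : x ≠ 0) (h : ‖x‖ < 1+ε) :
    HasFDerivAt (fun y : Euc n => phi ε d ‖y‖)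
      ((phi1 ε d ‖x‖ * ‖x‖⁻¹) • innerSL ℝ x) x := by
  have := (hasDerivAt_phi ε d ‖x‖ h).comp_hasFDerivAt x (hasFDerivAt_norm' hx)
  simpa [Function.comp_def, smul_smul] using this

lemma hB {x : Euc n} (hx : x ≠ 0) :
    HasFDerivAt (fun y : Euc n => ‖y‖⁻¹)
      ((-(‖x‖^2)⁻¹ * ‖x‖⁻¹) • innerSL ℝ x) x := by
  have h0 : ‖x‖ ≠ 0 := norm_ne_zero_iff.2 hx
  have := (hasDerivAt_inv h0).comp_hasFDerivAt x (hasFDerivAt_norm' hx)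
  simpa [Function.comp_def, smul_smul] using this

lemma hC {x : Euc n} (i : Fin n) :
    HasFDerivAt (fun y : Euc n => y i) (EuclideanSpace.proj (𝕜 := ℝ) i) x :=
  (EuclideanSpace.proj (𝕜 := ℝ) i).hasFDerivAt

lemma fconf_eventually (x : Euc n) (h : ‖x‖ < 1+ε) :
    fconf n ε d =ᶠ[nhds x] (fun y => phi ε d ‖y‖) := by
  have hmem : {y : Euc n | ‖y‖ < 1+ε} ∈ nhds x := by
    have : IsOpen {y : Euc n | ‖y‖ < 1+ε} := isOpen_lt continuous_norm continuous_const
    exact this.mem_nhds h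
  filter_upwards [hmem] with y hy
  simp [fconf, phi, hy]

lemma pd_fconf {x : Euc n} (hx : x ≠ 0) (h : ‖x‖ < 1+ε) (i : Fin n) :
    pd (fconf n ε d) i x = phi1 ε d ‖x‖ * ‖x‖⁻¹ * x i := by
  have h1 : fderiv ℝ (fconf n ε d) x = fderiv ℝ (fun y => phi ε d ‖y‖) x :=
    (fconf_eventually x h).fderiv_eq
  rw [pd, h1, (hF hx h).fderiv]
  simp [EuclideanSpace.inner_single_right, mul_assoc]

lemma hG {x : Euc n} (hx : x ≠ 0) (h : ‖x‖ < 1+ε) (i : Fin n) :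
    HasFDerivAt (fun y : Euc n => phi1 ε d ‖y‖ * ‖y‖⁻¹ * y i)
      (((phi1 ε d ‖x‖ * ‖x‖⁻¹) • (EuclideanSpace.proj (𝕜 := ℝ) i)) +
        (x i) • ((phi1 ε d ‖x‖ • ((-(‖x‖^2)⁻¹ * ‖x‖⁻¹) • innerSL ℝ x)) +
          ‖x‖⁻¹ • ((phi2 ε d ‖x‖ * ‖x‖⁻¹) • innerSL ℝ x))) x :=
  ((hA hx h).mul (hB hx)).mul (hC i)

lemma pd_pd_fconf {x : Euc n} (hx : x ≠ 0) (h : ‖x‖ < 1+ε) (i : Fin n) :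
    pd (pd (fconf n ε d) i) i x =
      phi1 ε d ‖x‖ * ‖x‖⁻¹ +
        x i ^ 2 * (phi1 ε d ‖x‖ * (-(‖x‖^2)⁻¹ * ‖x‖⁻¹) + ‖x‖⁻¹ * (phi2 ε d ‖x‖ * ‖x‖⁻¹)) := by
  have hU : IsOpen {y : Euc n | 0 < ‖y‖ ∧ ‖y‖ < 1+ε} := by
    have : {y : Euc n | 0 < ‖y‖ ∧ ‖y‖ < 1+ε} = (fun y : Euc n => ‖y‖) ⁻¹' Set.Ioo 0 (1+ε) := by
      ext y; simp [Set.mem_Ioo]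
    rw [this]; exact isOpen_Ioo.preimage continuous_norm
  have hxU : x ∈ {y : Euc n | 0 < ‖y‖ ∧ ‖y‖ < 1+ε} := ⟨norm_pos_iff.2 hx, h⟩
  have heq : pd (fconf n ε d) i =ᶠ[nhds x] (fun y => phi1 ε d ‖y‖ * ‖y‖⁻¹ * y i) := by
    filter_upwards [hU.mem_nhds hxU] with y hy
    exact pd_fconf (norm_pos_iff.1 hy.1) hy.2 i
  rw [pd, heq.fderiv_eq, (hG hx h i).fderiv]
  simp [EuclideanSpace.inner_single_right, EuclideanSpace.single_apply]
  ring

lemma sum_sq_coords (x : Euc n) : ∑ i, (x i)^2 = ‖x‖^2 := by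
  have h1 : ‖x‖^2 = ∑ i, ‖x i‖^2 := by
    rw [EuclideanSpace.norm_eq, Real.sq_sqrt (by positivity)]
  rw [h1]
  simp [Real.norm_eq_abs, sq_abs]

lemma eucLap_fconf {x : Euc n} (hx : x ≠ 0) (h : ‖x‖ < 1+ε) :
    eucLap (fconf n ε d) x
      = phi2 ε d ‖x‖ + ((n:ℝ)-1) * phi1 ε d ‖x‖ * ‖x‖⁻¹ := by
  have hr : ‖x‖ ≠ 0 := norm_ne_zero_iff.2 hx
  unfold eucLap
  rw [Finset.sum_congr rfl (fun i _ => pd_pd_fconf hx h i)]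
  rw [Finset.sum_add_distrib, Finset.sum_const, ← Finset.sum_mul, sum_sq_coords]
  simp only [Finset.card_univ, Fintype.card_fin, nsmul_eq_mul]
  field_simp
  ring

lemma eucGradSq_fconf {x : Euc n} (hx : x ≠ 0) (h : ‖x‖ < 1+ε) :
    eucGradSq (fconf n ε d) x = (phi1 ε d ‖x‖)^2 := by
  have hr : ‖x‖ ≠ 0 := norm_ne_zero_iff.2 hx
  unfold eucGradSq
  rw [Finset.sum_congr rfl (fun i _ => by rw [pd_fconf hx h i])]
  simp only [mul_pow]
  rw [← Finset.mul_sum, sum_sq_coords]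
  field_simp

end Derivs

/-! ### The key inequality -/

set_option maxHeartbeats 2000000 in
lemma key_ineq (n : ℕ) (hn : 3 ≤ n) (ε d r : ℝ) (hε : 0 < ε) (hε1 : ε < 1)
    (hr1 : 1 - ε < r) (hr2 : r < 1)
    (hd : 2*ε + (4*((n:ℝ)-1)*ε^2/(1-ε) + n)/2 + 1 ≤ d) :
    0 < -(2 * ((n:ℝ) - 1)) * (phi2 ε d r + ((n:ℝ)-1) * phi1 ε d r * r⁻¹)
        - ((n:ℝ)-1) * ((n:ℝ)-2) * (phi1 ε d r)^2 := by
  set N := (n:ℝ) with hNdef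
  have hN : (3:ℝ) ≤ N := by simp only [hNdef]; exact_mod_cast hn
  have h1ε : (0:ℝ) < 1 - ε := by linarith
  have hr0 : 0 < r := by linarith
  have hs : 0 < 1+ε-r := by linarith
  have hs2 : 1+ε-r < 2*ε := by linarith
  have h1ε' : (0:ℝ) < 1 - ε := by linarith
  have hNN : (0:ℝ) < N - 1 := by linarith
  have hC : 0 ≤ 4*(N-1)*ε^2/(1-ε) := by
    apply div_nonneg _ (le_of_lt h1ε')
    nlinarith
  have hd0 : 0 < d := by nlinarith
  set E := Real.exp (-(2*d)/(1+ε-r)) with hEdef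
  have hEpos : 0 < E := Real.exp_pos _
  have hE1 : E < Real.exp (-(d/ε)) := by
    apply Real.exp_lt_exp.2
    have h2 : d/ε < 2*d/(1+ε-r) := by
      rw [div_lt_div_iff₀ hε hs]; nlinarith
    have : -(2*d)/(1+ε-r) = -(2*d/(1+ε-r)) := by ring
    rw [this]; linarith
  have hdE : d * E < ε := by
    have h3 : d/ε < Real.exp (d/ε) := by
      have := Real.add_one_le_exp (d/ε)
      linarith
    have h4 : Real.exp (-(d/ε)) < ε/d := by
      rw [Real.exp_neg]
      have h5 : (0:ℝ) < d/ε := by positivity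
      calc (Real.exp (d/ε))⁻¹ < (d/ε)⁻¹ := by
            apply inv_strictAnti₀ h5 h3
        _ = ε/d := by rw [inv_div]
    calc d * E < d * (ε/d) := by
          apply mul_lt_mul_of_pos_left _ hd0
          linarith
      _ = ε := by field_simp
  have hs4 : (1+ε-r)^2 < 4*ε^2 := by nlinarith
  have h2 : (N-1)*(1+ε-r)^2/r < 4*(N-1)*ε^2/(1-ε) := by
    rw [div_lt_div_iff₀ hr0 h1ε]
    have ha : (1+ε-r)^2*(1-ε) < 4*ε^2*(1-ε) := by nlinarith
    have hb : 4*ε^2*(1-ε) < 4*ε^2*r := by nlinarith [mul_pos hε hε]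
    nlinarith [mul_lt_mul_of_pos_left (lt_trans ha hb) hNN]
  have h3 : (N-2)*(d*E) < N := by nlinarith
  have hK : 0 < 2*(d-(1+ε-r)) - (N-1)*(1+ε-r)^2/r - (N-2)*(d*E) := by
    linarith
  have hAlg : -(2 * (N - 1)) * (phi2 ε d r + (N-1) * phi1 ε d r * r⁻¹)
        - (N-1) * (N-2) * (phi1 ε d r)^2
      = (N-1) * (4*d/(1+ε-r)^4 * E) *
          (2*(d-(1+ε-r)) - (N-1)*(1+ε-r)^2/r - (N-2)*(d*E)) := by
    simp only [phi1, phi2, ← hEdef]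
    field_simp
    ring
  rw [hAlg]
  have hfac : 0 < (N-1) * (4*d/(1+ε-r)^4 * E) := by
    apply mul_pos hNN
    exact mul_pos (div_pos (by linarith) (by positivity)) hEpos
  exact mul_pos hfac hK

/-- for all sufficiently large `d`, the conformal metric `e^{2f}·g_Eucl`
(whose scalar curvature is `e^{-2f}(-2(n-1)Δf - (n-1)(n-2)|∇f|²)`, since `Scal(g_Eucl)=0`)
has positive scalar curvature on the ε-neighborhood `{1-ε < ‖x‖ < 1}` of the unit sphere
inside the unit ball, and equals `g_Eucl` outside `B_{1+ε}(0)` (i.e. `f = 0` there). -/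
theorem stmt0 (n : ℕ) (hn : 3 ≤ n) (ε : ℝ) (hε : 0 < ε) (hε1 : ε < 1) :
    ∃ d₀ : ℝ, ∀ d : ℝ, d₀ ≤ d →
      (∀ x : Euc n, 1 - ε < ‖x‖ → ‖x‖ < 1 →
        0 < Real.exp (-2 * fconf n ε d x) *
          (-(2 * ((n : ℝ) - 1)) * eucLap (fconf n ε d) x
            - ((n : ℝ) - 1) * ((n : ℝ) - 2) * eucGradSq (fconf n ε d) x)) ∧
      (∀ x : Euc n, 1 + ε ≤ ‖x‖ → fconf n ε d x = 0) := by
  refine ⟨2*ε + (4*((n:ℝ)-1)*ε^2/(1-ε) + n)/2 + 1, fun d hd => ⟨?_, ?_⟩⟩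
  · intro x hx1 hx2
    have hx : x ≠ 0 := by
      intro h0
      rw [h0, norm_zero] at hx1; linarith
    have h : ‖x‖ < 1 + ε := by linarith
    rw [eucLap_fconf hx h, eucGradSq_fconf hx h]
    exact mul_pos (Real.exp_pos _) (key_ineq n hn ε d ‖x‖ hε hε1 hx1 hx2 hd)
  · intro x hx
    simp [fconf, not_lt.2 hx]

end
end

section
/- Let f : ℝ^m → ℝ^n be a Lipschitz map, A ⊆ ℝ^m a Borel set, and k ≥ 0. Then ∫_{ℝ^n} #{x ∈ A : f(x) = y} dH^k(y) ≤ Lip(f)^k · H^k(A), where H^k denotes k-dimensional Hausdorff measure and #S denotes cardinality (with value ∞ allowed). -/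
noncomputable section

open MeasureTheory
open scoped ENNReal NNReal

/-- The "cube index" map at scale `1/(j+1)`. -/
private def cubeIdx (m : ℕ) (j : ℕ) (x : EuclideanSpace ℝ (Fin m)) : Fin m → ℤ :=
  fun d => ⌊(j + 1 : ℝ) * x d⌋

private lemma cubeIdx_measurable (m j : ℕ) : Measurable (cubeIdx m j) := by
  apply measurable_pi_lambda
  intro d
  have h1 : Measurable fun x : EuclideanSpace ℝ (Fin m) => x d :=
    (EuclideanSpace.proj (𝕜 := ℝ) d).continuous.measurable
  exact Int.measurable_floor.comp (h1.const_mul _)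

/-- Distinct points eventually get distinct cube indices. -/
private lemma cubeIdx_eventually_ne (m : ℕ) {x x' : EuclideanSpace ℝ (Fin m)} (h : x ≠ x') :
    ∀ᶠ j in Filter.atTop, cubeIdx m j x ≠ cubeIdx m j x' := by
  have : ∃ d, x d ≠ x' d := by
    by_contra hc
    push_neg at hc
    exact h (PiLp.ext hc)
  obtain ⟨d, hd⟩ := this
  -- WLOG handles both orders
  have key : ∀ a b : ℝ, a < b → ∀ᶠ j : ℕ in Filter.atTop,
      ⌊(j + 1 : ℝ) * a⌋ ≠ ⌊(j + 1 : ℝ) * b⌋ := by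
    intro a b hab
    obtain ⟨N, hN⟩ := exists_nat_gt (1 / (b - a))
    filter_upwards [Filter.eventually_ge_atTop N] with j hj
    have hba : 0 < b - a := sub_pos.2 hab
    have h1 : (1 : ℝ) ≤ (j + 1 : ℝ) * (b - a) := by
      rw [div_lt_iff₀ hba] at hN
      have : (N : ℝ) ≤ (j : ℝ) + 1 := by
        have : (N : ℝ) ≤ j := by exact_mod_cast hj
        linarith
      nlinarith
    have h2 : (j + 1 : ℝ) * a + 1 ≤ (j + 1 : ℝ) * b := by nlinarith
    have : ⌊(j + 1 : ℝ) * a⌋ + 1 ≤ ⌊(j + 1 : ℝ) * b⌋ := by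
      calc ⌊(j + 1 : ℝ) * a⌋ + 1 = ⌊(j + 1 : ℝ) * a + 1⌋ := (Int.floor_add_one _).symm
        _ ≤ ⌊(j + 1 : ℝ) * b⌋ := Int.floor_le_floor h2
    omega
  rcases lt_or_gt_of_ne hd with hlt | hlt
  · filter_upwards [key _ _ hlt] with j hj hcon
    exact hj (congrFun hcon d)
  · filter_upwards [key _ _ hlt] with j hj hcon
    exact hj (congrFun hcon d).symm

/-- Eilenberg/Federer inequality: for Lipschitz `f : ℝᵐ → ℝⁿ`, a Borel
set `A` and `k ≥ 0`, `∫_{ℝⁿ} #{x ∈ A : f x = y} dH^k(y) ≤ Lip(f)^k · H^k(A)`. -/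
theorem stmt3 (m n : ℕ) (K : NNReal) (f : EuclideanSpace ℝ (Fin m) → EuclideanSpace ℝ (Fin n))
    (hf : LipschitzWith K f) (A : Set (EuclideanSpace ℝ (Fin m))) (hA : MeasurableSet A)
    (k : ℝ) (hk : 0 ≤ k) :
    ∫⁻ y, ((A ∩ f ⁻¹' {y}).encard : ℝ≥0∞) ∂(μH[k]) ≤ (K : ℝ≥0∞) ^ k * μH[k] A := by
  classical
  let E := EuclideanSpace ℝ (Fin m)
  let F := EuclideanSpace ℝ (Fin n)
  -- pieces of the partition of A at scale j
  set P : ℕ → (Fin m → ℤ) → Set E := fun j i => A ∩ (cubeIdx m j) ⁻¹' {i} with hP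
  have hPmeas : ∀ j i, MeasurableSet (P j i) := fun j i =>
    hA.inter ((cubeIdx_measurable m j) (measurableSet_singleton i))
  -- measurable covers of images of pieces
  have hBex : ∀ j i, ∃ B : Set F, f '' (P j i) ⊆ B ∧ MeasurableSet B ∧
      μH[k] B = μH[k] (f '' (P j i)) :=
    fun j i => exists_measurable_superset (μH[k]) (f '' (P j i))
  choose B hB1 hB2 hB3 using hBex
  set g : ℕ → F → ℝ≥0∞ := fun j y => ∑' i, (B j i).indicator 1 y with hg
  have hgmeas : ∀ j, Measurable (g j) :=
    fun j => Measurable.ennreal_tsum fun i => measurable_one.indicator (hB2 j i)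
  -- key pointwise bound for finsets
  have hfinset : ∀ (y : F) (T : Finset E), ↑T ⊆ A ∩ f ⁻¹' {y} →
      (T.card : ℝ≥0∞) ≤ Filter.liminf (fun j => g j y) Filter.atTop := by
    intro y T hT
    apply Filter.le_liminf_of_le (by isBoundedDefault)
    have hinj : ∀ᶠ j in Filter.atTop, ∀ x ∈ T, ∀ x' ∈ T, x ≠ x' →
        cubeIdx m j x ≠ cubeIdx m j x' := by
      rw [T.eventually_all]
      intro x hx
      rw [T.eventually_all]
      intro x' hx'
      rcases eq_or_ne x x' with rfl | hne
      · exact Filter.Eventually.of_forall fun j h => absurd rfl h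
      · filter_upwards [cubeIdx_eventually_ne m hne] with j hj _
        exact hj
    filter_upwards [hinj] with j hj
    -- injective on T at scale j
    have hinjT : Set.InjOn (cubeIdx m j) ↑T := by
      intro x hx x' hx' hxx'
      by_contra hne
      exact hj x hx x' hx' hne hxx'
    calc (T.card : ℝ≥0∞) = ((T.image (cubeIdx m j)).card : ℝ≥0∞) := by
          rw [Finset.card_image_of_injOn hinjT]
      _ = ∑ i ∈ T.image (cubeIdx m j), 1 := by simp
      _ ≤ ∑ i ∈ T.image (cubeIdx m j), (B j i).indicator 1 y := by
          apply Finset.sum_le_sum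
          intro i hi
          obtain ⟨x, hx, rfl⟩ := Finset.mem_image.1 hi
          have hxA : x ∈ A ∩ f ⁻¹' {y} := hT hx
          have hyB : y ∈ B j (cubeIdx m j x) := by
            apply hB1
            exact ⟨x, ⟨hxA.1, rfl⟩, hxA.2⟩
          simp [Set.indicator_of_mem hyB]
      _ ≤ g j y := ENNReal.sum_le_tsum _
  -- pointwise bound on encard
  have hpt : ∀ y : F, ((A ∩ f ⁻¹' {y}).encard : ℝ≥0∞) ≤
      Filter.liminf (fun j => g j y) Filter.atTop := by
    intro y
    rcases (A ∩ f ⁻¹' {y}).finite_or_infinite with hfin | hinf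
    · rw [Set.Finite.encard_eq_coe_toFinset_card hfin]
      simp only [ENat.toENNReal_coe]
      exact hfinset y hfin.toFinset (by simp)
    · rw [Set.encard_eq_top hinf]
      simp only [ENat.toENNReal_top]
      rw [← ENNReal.iSup_natCast]
      apply iSup_le
      intro N
      obtain ⟨t, hts, htfin, htcard⟩ := hinf.exists_subset_ncard_eq N
      have hb := hfinset y htfin.toFinset (by rwa [Set.Finite.coe_toFinset])
      have hcard : htfin.toFinset.card = N := by
        rw [← Set.ncard_eq_toFinset_card t htfin, htcard]
      rwa [hcard] at hb
  -- integral bound for each j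
  have hint : ∀ j, ∫⁻ y, g j y ∂(μH[k]) ≤ (K : ℝ≥0∞) ^ k * μH[k] A := by
    intro j
    rw [hg]
    rw [lintegral_tsum fun i => (measurable_one.indicator (hB2 j i)).aemeasurable]
    calc ∑' i, ∫⁻ y, (B j i).indicator 1 y ∂(μH[k])
        = ∑' i, μH[k] (B j i) := by
          congr 1; ext i; exact lintegral_indicator_one (hB2 j i)
      _ = ∑' i, μH[k] (f '' (P j i)) := by congr 1; ext i; exact hB3 j i
      _ ≤ ∑' i, (K : ℝ≥0∞) ^ k * μH[k] (P j i) := by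
          apply ENNReal.tsum_le_tsum
          intro i
          exact hf.hausdorffMeasure_image_le hk (P j i)
      _ = (K : ℝ≥0∞) ^ k * ∑' i, μH[k] (P j i) := by rw [ENNReal.tsum_mul_left]
      _ = (K : ℝ≥0∞) ^ k * μH[k] A := by
          congr 1
          rw [← measure_iUnion ?_ (fun i => hPmeas j i)]
          · congr 1
            ext x
            simp only [Set.mem_iUnion, hP, Set.mem_inter_iff, Set.mem_preimage,
              Set.mem_singleton_iff]
            constructor
            · rintro ⟨i, hxA, -⟩; exact hxA
            · intro hxA; exact ⟨cubeIdx m j x, hxA, rfl⟩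
          · intro i i' hii'
            apply Set.disjoint_left.2
            rintro x ⟨-, hx⟩ ⟨-, hx'⟩
            exact hii' (hx.symm.trans hx')
  calc ∫⁻ y, ((A ∩ f ⁻¹' {y}).encard : ℝ≥0∞) ∂(μH[k])
      ≤ ∫⁻ y, Filter.liminf (fun j => g j y) Filter.atTop ∂(μH[k]) :=
        lintegral_mono hpt
    _ ≤ Filter.liminf (fun j => ∫⁻ y, g j y ∂(μH[k])) Filter.atTop :=
        lintegral_liminf_le hgmeas
    _ ≤ Filter.liminf (fun _ : ℕ => (K : ℝ≥0∞) ^ k * μH[k] A) Filter.atTop :=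
        Filter.liminf_le_liminf (Filter.Eventually.of_forall hint)
    _ = (K : ℝ≥0∞) ^ k * μH[k] A := Filter.liminf_const _
end
end
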